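/- Let r ≥ 1 be an integer, ħ a nonzero complex number, and x a complex number such that x/ħ + 1/2 is not an integer. Then for every integer d ≥ 0 one has the three-term recurrence Φ^d(x − ħ) − (x − ħ/2)·Φ^d(x) + Φ^{d−1}(x + rħ) = 0 (for d = 0 this reads Φ^0(x − ħ) = (x − ħ/2)·Φ^0(x), using the convention Φ^{−1} = 0). -/

import Mathlib

/-- The term `Φ^d(x)` of the wave function for the orbifold Gromov-Witten theory of `ℙ[r]`:
`Φ^d(x) = √(2π) · ((−1)^d/(r^d · d!)) · ħ^(−x/ħ − (r+1)d) / Γ(x/ħ + rd + 1/2)`,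
where `Γ` is the complex Gamma function and powers of `ħ` are principal-branch complex powers. -/
noncomputable def PhiD (r : ℕ) (hbar : ℂ) (d : ℕ) (x : ℂ) : ℂ :=
  (Real.sqrt (2 * Real.pi) : ℂ) * ((-1 : ℂ) ^ d / ((r : ℂ) ^ d * (d.factorial : ℂ))) *
    hbar ^ (-(x / hbar) - ((r : ℂ) + 1) * (d : ℂ)) /
      Complex.Gamma (x / hbar + (r : ℂ) * (d : ℂ) + 1 / 2)

private lemma aux_two (z G w a b : ℂ) (hz : z ≠ 0) (h : z * a - w * b = 0) :
    a / G - w * (b / (z * G)) + 0 = 0 := by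
  rw [add_zero, ← mul_div_mul_left a G hz, ← mul_div_assoc, ← sub_div, h, zero_div]

private lemma aux_three (z G w a b c : ℂ) (hz : z ≠ 0) (h : z * a - w * b + c = 0) :
    a / G - w * (b / (z * G)) + c / (z * G) = 0 := by
  rw [← mul_div_mul_left a G hz, ← mul_div_assoc, ← sub_div, ← add_div, h, zero_div]

/-- The three-term recurrence `Φ^d(x − ħ) − (x − ħ/2)·Φ^d(x) + Φ^{d−1}(x + rħ) = 0`,
with the convention `Φ^{−1} = 0`. -/
theorem phiD_three_term_recurrence (r : ℕ) (hr : 1 ≤ r) (hbar : ℂ) (hh : hbar ≠ 0) (x : ℂ)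
    (hx : ∀ n : ℤ, x / hbar + 1 / 2 ≠ (n : ℂ)) (d : ℕ) :
    PhiD r hbar d (x - hbar) - (x - hbar / 2) * PhiD r hbar d x +
      (if d = 0 then 0 else PhiD r hbar (d - 1) (x + (r : ℂ) * hbar)) = 0 := by
  have hr0 : (r : ℂ) ≠ 0 := Nat.cast_ne_zero.mpr (by omega)
  obtain ⟨u, rfl⟩ : ∃ u : ℂ, x = hbar * u := ⟨x / hbar, by field_simp⟩
  have hxu : hbar * u / hbar = u := mul_div_cancel_left₀ u hh
  rw [hxu] at hx
  have hG : Complex.Gamma (u + (r : ℂ) * (d : ℂ) + 1 / 2) ≠ 0 := by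
    apply Complex.Gamma_ne_zero
    intro m hm
    apply hx (-(m : ℤ) - (r : ℤ) * (d : ℤ))
    push_cast
    linear_combination hm
  have hz : u + (r : ℂ) * (d : ℂ) - 1 / 2 ≠ 0 := by
    intro h
    apply hx (1 - (r : ℤ) * (d : ℤ))
    push_cast
    linear_combination h
  have hG' : Complex.Gamma (u + (r : ℂ) * (d : ℂ) - 1 / 2) ≠ 0 := by
    apply Complex.Gamma_ne_zero
    intro m hm
    apply hx (1 - (m : ℤ) - (r : ℤ) * (d : ℤ))
    push_cast
    linear_combination hm
  have hGrec : Complex.Gamma (u + (r : ℂ) * (d : ℂ) + 1 / 2)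
      = (u + (r : ℂ) * (d : ℂ) - 1 / 2) *
        Complex.Gamma (u + (r : ℂ) * (d : ℂ) - 1 / 2) := by
    have h := Complex.Gamma_add_one (u + (r : ℂ) * (d : ℂ) - 1 / 2) hz
    rw [show u + (r : ℂ) * (d : ℂ) - 1 / 2 + 1
        = u + (r : ℂ) * (d : ℂ) + 1 / 2 by ring] at h
    exact h
  have hdiv1 : (hbar * u - hbar) / hbar = u - 1 := by field_simp
  have hpow1 : hbar ^ (-((hbar * u - hbar) / hbar) - ((r : ℂ) + 1) * (d : ℂ))
      = hbar * hbar ^ (-(hbar * u / hbar) - ((r : ℂ) + 1) * (d : ℂ)) := by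
    rw [hxu, hdiv1, show -(u - 1) - ((r : ℂ) + 1) * (d : ℂ)
        = 1 + (-u - ((r : ℂ) + 1) * (d : ℂ)) by ring,
      show -u - ((r : ℂ) + 1) * (d : ℂ)
        = -u - ((r : ℂ) + 1) * (d : ℂ) from rfl,
      Complex.cpow_add _ _ hh, Complex.cpow_one]
  cases d with
  | zero =>
    simp only [if_pos rfl, Nat.cast_zero] at *
    unfold PhiD
    simp only [Nat.cast_zero, Nat.factorial_zero, Nat.cast_one, pow_zero]
    rw [hpow1, hxu, hdiv1,
      show u - 1 + (r : ℂ) * (0 : ℂ) + 1 / 2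
        = u + (r : ℂ) * (0 : ℂ) - 1 / 2 by ring,
      hGrec]
    exact aux_two _ _ _ _ _ hz (by ring)
  | succ n =>
    simp only [Nat.succ_ne_zero, if_neg, Nat.add_sub_cancel]
    have hdiv2 : (hbar * u + (r : ℂ) * hbar) / hbar = u + (r : ℂ) := by
      field_simp
    have hpow2 : hbar ^ (-((hbar * u + (r : ℂ) * hbar) / hbar) - ((r : ℂ) + 1) * (n : ℂ))
        = hbar * hbar ^ (-u - ((r : ℂ) + 1) * ((n : ℕ) + 1 : ℂ)) := by
      rw [hdiv2, show -(u + (r : ℂ)) - ((r : ℂ) + 1) * (n : ℂ)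
          = 1 + (-u - ((r : ℂ) + 1) * ((n : ℕ) + 1 : ℂ)) by ring,
        Complex.cpow_add _ _ hh, Complex.cpow_one]
    unfold PhiD
    push_cast at hpow1 hpow2 hGrec hG hG' hz ⊢
    rw [hpow1, hpow2, hxu, hdiv1, hdiv2,
      show u - 1 + (r : ℂ) * ((n : ℂ) + 1) + 1 / 2
        = u + (r : ℂ) * ((n : ℂ) + 1) - 1 / 2 by ring,
      show u + (r : ℂ) + (r : ℂ) * (n : ℂ) + 1 / 2
        = u + (r : ℂ) * ((n : ℂ) + 1) + 1 / 2 by ring,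
      hGrec, Nat.factorial_succ]
    push_cast
    have hfac : ((n.factorial : ℂ)) ≠ 0 := Nat.cast_ne_zero.mpr n.factorial_ne_zero
    have hn1 : ((n : ℂ) + 1) ≠ 0 := by
      have := Nat.cast_ne_zero (R := ℂ).mpr (Nat.succ_ne_zero n)
      push_cast at this
      exact this
    refine aux_three _ _ _ _ _ _ hz ?_
    field_simp
    ring
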